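/- Let 0<q<1, φ ∈ [0,2π). The operators on ℓ²(ℤ₊): θ_φ(z₂²) = e^{iφ} I, θ_φ(z₂¹) = θ_φ(z₁²) = 0, θ_φ(z₁¹) = q^{-1} CS, satisfy the defining relations of Pol(Mat₂)_q; in particular (z₁¹)*z₁¹ = q² z₁¹(z₁¹)* − (1−q²)(z₂¹(z₂¹)* + z₁²(z₁²)*) + q^{-2}(1−q²)² z₂²(z₂²)* + (1−q²)·1 becomes q^{-2}(CS)*(CS) = (CS)(CS)* + q^{-2}(1−q²)² + (1−q²), which holds. -/

import Mathlib

set_option maxHeartbeats 1600000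


open ContinuousLinearMap in
/-- The operators of the representation θ_φ of Pol(Mat₂)_q,
`θ_φ(z₂²) = e^{iφ}·I`, `θ_φ(z₂¹) = θ_φ(z₁²) = 0`, `θ_φ(z₁¹) = q^{-1} CS`,
satisfy the defining relations (ff2); in particular the first relation of (ff2)
becomes `q^{-2}(CS)*(CS) = (CS)(CS)* + q^{-2}(1−q²)²·I + (1−q²)·I`, which holds. -/
theorem stmt10 {H : Type*} [NormedAddCommGroup H] [InnerProductSpace ℂ H] [CompleteSpace H]
    (q : ℝ) (hq0 : 0 < q) (hq1 : q < 1)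
    (φ : ℝ) (hφ : φ ∈ Set.Ico 0 (2 * Real.pi))
    (e : HilbertBasis ℕ ℂ H)
    (S C : H →L[ℂ] H)
    (hS : ∀ n : ℕ, S (e n) = e (n + 1))
    (hC : ∀ n : ℕ, C (e n) = ((Real.sqrt (1 - q ^ (2 * n)) : ℝ) : ℂ) • e n)
    (W11 W12 W21 W22 : H →L[ℂ] H)
    (hW22 : W22 = Complex.exp (φ * Complex.I) • (1 : H →L[ℂ] H))
    (hW21 : W21 = 0) (hW12 : W12 = 0)
    (hW11 : W11 = ((q⁻¹ : ℝ) : ℂ) • (C * S)) :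
    -- the relations (ff2) for the θ_φ operators
    (adjoint W11 * W11
        = ((q ^ 2 : ℝ) : ℂ) • (W11 * adjoint W11)
          - ((1 - q ^ 2 : ℝ) : ℂ) • (W21 * adjoint W21 + W12 * adjoint W12)
          + ((q⁻¹ ^ 2 * (1 - q ^ 2) ^ 2 : ℝ) : ℂ) • (W22 * adjoint W22)
          + ((1 - q ^ 2 : ℝ) : ℂ) • 1)
    ∧ (adjoint W21 * W21
        = ((q ^ 2 : ℝ) : ℂ) • (W21 * adjoint W21)
          - ((1 - q ^ 2 : ℝ) : ℂ) • (W22 * adjoint W22) + ((1 - q ^ 2 : ℝ) : ℂ) • 1)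
    ∧ (adjoint W12 * W12
        = ((q ^ 2 : ℝ) : ℂ) • (W12 * adjoint W12)
          - ((1 - q ^ 2 : ℝ) : ℂ) • (W22 * adjoint W22) + ((1 - q ^ 2 : ℝ) : ℂ) • 1)
    ∧ (adjoint W22 * W22
        = ((q ^ 2 : ℝ) : ℂ) • (W22 * adjoint W22) + ((1 - q ^ 2 : ℝ) : ℂ) • 1)
    -- the simplified form of the first relation
    ∧ ((q⁻¹ ^ 2 : ℝ) : ℂ) • (adjoint (C * S) * (C * S))
        = (C * S) * adjoint (C * S)
          + ((q⁻¹ ^ 2 * (1 - q ^ 2) ^ 2 + (1 - q ^ 2) : ℝ) : ℂ) • 1 := by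
  have hqne : q ≠ 0 := hq0.ne'
  -- nonnegativity of 1 - q^(2m)
  have hnn : ∀ m : ℕ, (0 : ℝ) ≤ 1 - q ^ (2 * m) := fun m =>
    sub_nonneg.2 (pow_le_one₀ hq0.le hq1.le)
  have hsq : ∀ m : ℕ, Real.sqrt (1 - q ^ (2 * m)) * Real.sqrt (1 - q ^ (2 * m))
      = 1 - q ^ (2 * m) := fun m => Real.mul_self_sqrt (hnn m)
  -- vectors are determined by inner products with the basis
  have hinj : ∀ x y : H, (∀ n, (inner ℂ (e n) x : ℂ) = inner ℂ (e n) y) → x = y := by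
    intro x y h
    apply e.repr.injective
    ext n
    simpa only [e.repr_apply_apply] using h n
  have horth := orthonormal_iff_ite.mp e.orthonormal
  set T : H →L[ℂ] H := C * S with hTdef
  have hT : ∀ n : ℕ, T (e n)
      = ((Real.sqrt (1 - q ^ (2 * (n + 1))) : ℝ) : ℂ) • e (n + 1) := by
    intro n
    simp [hTdef, ContinuousLinearMap.mul_apply, hS, hC]
  -- adjoint of T on basis vectors
  have hadjS : ∀ n : ℕ, adjoint T (e (n + 1))
      = ((Real.sqrt (1 - q ^ (2 * (n + 1))) : ℝ) : ℂ) • e n := by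
    intro n
    apply hinj
    intro k
    rw [ContinuousLinearMap.adjoint_inner_right, hT k, inner_smul_left, inner_smul_right,
      horth, horth, Complex.conj_ofReal]
    by_cases hk : k = n
    · subst hk; simp
    · have : k + 1 ≠ n + 1 := fun h => hk (Nat.succ_injective h)
      simp [hk, this]
  have hadj0 : adjoint T (e 0) = 0 := by
    apply hinj
    intro k
    rw [ContinuousLinearMap.adjoint_inner_right, hT k, inner_smul_left, horth]
    simp
  -- the key scalar identity
  have hscal : ∀ n : ℕ, q⁻¹ ^ 2 * (1 - q ^ (2 * (n + 1)))
      = (1 - q ^ (2 * n)) + (q⁻¹ ^ 2 * (1 - q ^ 2) ^ 2 + (1 - q ^ 2)) := by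
    intro n
    have h1 : q ^ (2 * (n + 1)) = q ^ (2 * n) * q ^ 2 := by
      rw [← pow_add]; ring_nf
    rw [h1]
    field_simp
    ring
  -- the simplified form of the first relation, proven on basis vectors
  have key : ((q⁻¹ ^ 2 : ℝ) : ℂ) • (adjoint T * T)
      = T * adjoint T + ((q⁻¹ ^ 2 * (1 - q ^ 2) ^ 2 + (1 - q ^ 2) : ℝ) : ℂ) • 1 := by
    have hd : Dense ((Submodule.span ℂ (Set.range (e : ℕ → H)) : Submodule ℂ H) : Set H) :=
      Submodule.dense_iff_topologicalClosure_eq_top.mpr e.dense_span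
    refine ContinuousLinearMap.ext_on hd ?_
    rintro _ ⟨n, rfl⟩
    have hLHS : (((q⁻¹ ^ 2 : ℝ) : ℂ) • (adjoint T * T)) (e n)
        = ((q⁻¹ ^ 2 * (1 - q ^ (2 * (n + 1))) : ℝ) : ℂ) • e n := by
      rw [ContinuousLinearMap.smul_apply, ContinuousLinearMap.mul_apply, hT n, map_smul,
        hadjS n, smul_smul, smul_smul, ← Complex.ofReal_mul, ← Complex.ofReal_mul,
        mul_assoc, hsq]
    rw [hLHS]
    have hRHS : (T * adjoint T + ((q⁻¹ ^ 2 * (1 - q ^ 2) ^ 2 + (1 - q ^ 2) : ℝ) : ℂ) • 1) (e n)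
        = ((1 - q ^ (2 * n) + (q⁻¹ ^ 2 * (1 - q ^ 2) ^ 2 + (1 - q ^ 2)) : ℝ) : ℂ) • e n := by
      rw [ContinuousLinearMap.add_apply, ContinuousLinearMap.mul_apply,
        ContinuousLinearMap.smul_apply, ContinuousLinearMap.one_apply]
      have hTT : T (adjoint T (e n)) = ((1 - q ^ (2 * n) : ℝ) : ℂ) • e n := by
        cases n with
        | zero => simp [hadj0]
        | succ m =>
          rw [hadjS m, map_smul, hT m, smul_smul, ← Complex.ofReal_mul, hsq]
      rw [hTT, ← add_smul, ← Complex.ofReal_add]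
    rw [hRHS, hscal n]
  -- adjoint of W22
  have hW22adj : adjoint W22 = Complex.exp (-(φ * Complex.I)) • (1 : H →L[ℂ] H) := by
    rw [hW22, ← ContinuousLinearMap.star_eq_adjoint, star_smul,
      ContinuousLinearMap.star_eq_adjoint, ContinuousLinearMap.one_def,
      ContinuousLinearMap.adjoint_id, ← ContinuousLinearMap.one_def]
    congr 1
    rw [RCLike.star_def, ← Complex.exp_conj]
    congr 1
    simp [Complex.conj_ofReal]
  have hW22prod : W22 * adjoint W22 = 1 := by
    rw [hW22adj, hW22, smul_mul_assoc, mul_smul_comm, one_mul, smul_smul,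
      ← Complex.exp_add, add_neg_cancel, Complex.exp_zero, one_smul]
  have hW22prod' : adjoint W22 * W22 = 1 := by
    rw [hW22adj, hW22, smul_mul_assoc, mul_smul_comm, one_mul, smul_smul,
      ← Complex.exp_add, neg_add_cancel, Complex.exp_zero, one_smul]
  have hone : (1 : ℂ) = ((q ^ 2 : ℝ) : ℂ) + ((1 - q ^ 2 : ℝ) : ℂ) := by
    push_cast; ring
  have hadjzero : adjoint (0 : H →L[ℂ] H) = 0 := by
    rw [← ContinuousLinearMap.star_eq_adjoint]; exact star_zero _
  refine ⟨?_, ?_, ?_, ?_, key⟩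
  · -- first relation
    have hadjsmul : adjoint (((q⁻¹ : ℝ) : ℂ) • T) = ((q⁻¹ : ℝ) : ℂ) • adjoint T := by
      rw [← ContinuousLinearMap.star_eq_adjoint, ← ContinuousLinearMap.star_eq_adjoint,
        star_smul, RCLike.star_def, Complex.conj_ofReal]
    rw [hW11, hW21, hW12, hadjsmul, hW22prod]
    have hLL : ((q⁻¹ : ℝ) : ℂ) • adjoint T * (((q⁻¹ : ℝ) : ℂ) • T)
        = ((q⁻¹ ^ 2 : ℝ) : ℂ) • (adjoint T * T) := by
      rw [smul_mul_assoc, mul_smul_comm, smul_smul, ← Complex.ofReal_mul, ← pow_two]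
    rw [hLL, key]
    simp only [hadjzero, zero_mul, mul_zero, add_zero, smul_zero, sub_zero]
    have hRR : ((q ^ 2 : ℝ) : ℂ) • (((q⁻¹ : ℝ) : ℂ) • T * (((q⁻¹ : ℝ) : ℂ) • adjoint T))
        = T * adjoint T := by
      rw [smul_mul_assoc, mul_smul_comm, smul_smul, smul_smul, ← Complex.ofReal_mul,
        ← Complex.ofReal_mul]
      have : q ^ 2 * q⁻¹ * q⁻¹ = 1 := by rw [pow_two]; field_simp
      rw [this, Complex.ofReal_one, one_smul]
    rw [hRR, Complex.ofReal_add, add_smul, add_assoc]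
  · rw [hW21, hW22prod]
    simp [hadjzero, ← neg_smul, ← add_smul]
  · rw [hW12, hW22prod]
    simp [hadjzero, ← neg_smul, ← add_smul]
  · rw [hW22prod', hW22prod, ← add_smul, ← hone, one_smul]
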